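/- arXiv:2403.19621 — 2 statements merged into one kernel-verified Lean document; each statement's English description precedes it below -/
import Mathlib

section
/- Fix an integer m ≥ 2 and a positive integer D that is not the m-th power of an integer. Consider the Hénon maps f(x,y) = (y, x + y^{m+1}) and g(x,y) = (y, x + D·y^{m+1}). Then f and g are conjugate by a polynomial automorphism of ℂ² with coefficients in ℚ(D^{1/m}) — namely h(x,y) = (αx, αy) with α^m = 1/D satisfies h ∘ f = g ∘ h — but there is no polynomial automorphism with all coefficients in ℚ conjugating f to g. -/
open Filter MvPolynomial

noncomputable section

/-- A map `ℂ² → ℂ²` given coordinatewise by polynomials in `ℂ[x,y]`. -/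
def IsPolyMap (φ : ℂ × ℂ → ℂ × ℂ) : Prop :=
  ∃ P Q : MvPolynomial (Fin 2) ℂ,
    ∀ p : ℂ × ℂ, φ p = (eval ![p.1, p.2] P, eval ![p.1, p.2] Q)

/-- A polynomial automorphism of `ℂ²`: a bijection such that both it and its
inverse are given coordinatewise by polynomials. -/
def IsPolyAuto (φ : ℂ × ℂ → ℂ × ℂ) : Prop :=
  IsPolyMap φ ∧ ∃ ψ : ℂ × ℂ → ℂ × ℂ, IsPolyMap ψ ∧
    Function.LeftInverse ψ φ ∧ Function.RightInverse ψ φ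

/-- The degree of a polynomial map of `ℂ²`: the maximum of the total degrees of
its two coordinate polynomials. -/
def polyDeg (φ : ℂ × ℂ → ℂ × ℂ) : ℕ :=
  sInf { d : ℕ | ∃ P Q : MvPolynomial (Fin 2) ℂ,
    (∀ p : ℂ × ℂ, φ p = (eval ![p.1, p.2] P, eval ![p.1, p.2] Q)) ∧
    d = max P.totalDegree Q.totalDegree }

/-- The dynamical degree `λ₁(f) = lim_{n→∞} deg(fⁿ)^{1/n}` (the limit exists,
so it coincides with the `limsup`). -/
def dynDeg (f : ℂ × ℂ → ℂ × ℂ) : ℝ :=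
  Filter.limsup (fun n : ℕ => (polyDeg (f^[n]) : ℝ) ^ ((n : ℝ)⁻¹)) Filter.atTop

/-- A loxodromic polynomial automorphism: dynamical degree `> 1`. -/
def IsLoxodromic (f : ℂ × ℂ → ℂ × ℂ) : Prop :=
  IsPolyAuto f ∧ 1 < dynDeg f

/-- The Euclidean norm on `ℂ²`. -/
def eNorm (p : ℂ × ℂ) : ℝ := Real.sqrt (‖p.1‖ ^ 2 + ‖p.2‖ ^ 2)

/-- `log⁺ t = max (log t) 0`. -/
def logPlus (t : ℝ) : ℝ := max (Real.log t) 0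

/-- An elementary Hénon map `(x, y) ↦ (a y + p(x), x)` with `a ≠ 0` and `deg p ≥ 2`. -/
def IsElementaryHenon (f : ℂ × ℂ → ℂ × ℂ) : Prop :=
  ∃ (a : ℂ) (p : Polynomial ℂ), a ≠ 0 ∧ 2 ≤ p.natDegree ∧
    ∀ q : ℂ × ℂ, f q = (a * q.2 + p.eval q.1, q.1)

/-- A generalized Hénon map: a (nonempty) finite composition of elementary Hénon maps. -/
def IsHenon (f : ℂ × ℂ → ℂ × ℂ) : Prop :=
  ∃ l : List (ℂ × ℂ → ℂ × ℂ), l ≠ [] ∧ (∀ h ∈ l, IsElementaryHenon h) ∧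
    f = l.foldr (· ∘ ·) id

/-- `K_f⁺`: the set of points with bounded forward orbit. -/
def Kplus (f : ℂ × ℂ → ℂ × ℂ) : Set (ℂ × ℂ) :=
  { p | Bornology.IsBounded (Set.range fun n : ℕ => f^[n] p) }

/-- `K_f⁻`: the set of points with bounded backward orbit. -/
def Kminus (f : ℂ × ℂ → ℂ × ℂ) : Set (ℂ × ℂ) :=
  { p | Bornology.IsBounded (Set.range fun n : ℕ => (Function.invFun f)^[n] p) }

/-- A polynomial map all of whose coefficients lie in the subset `S ⊆ ℂ`. -/
def IsPolyMapOver (S : Set ℂ) (φ : ℂ × ℂ → ℂ × ℂ) : Prop :=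
  ∃ P Q : MvPolynomial (Fin 2) ℂ,
    (∀ p : ℂ × ℂ, φ p = (eval ![p.1, p.2] P, eval ![p.1, p.2] Q)) ∧
    (∀ m, coeff m P ∈ S) ∧ (∀ m, coeff m Q ∈ S)

/-- A polynomial automorphism defined over `S`: the coordinate polynomials of both
it and its inverse have all their coefficients in `S`. -/
def IsPolyAutoOver (S : Set ℂ) (φ : ℂ × ℂ → ℂ × ℂ) : Prop :=
  IsPolyMapOver S φ ∧ ∃ ψ : ℂ × ℂ → ℂ × ℂ, IsPolyMapOver S ψ ∧
    Function.LeftInverse ψ φ ∧ Function.RightInverse ψ φ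

section CoreHenon

abbrev Rq := MvPolynomial (Fin 2) ℚ

def Fq (n : ℕ) : Rq →ₐ[ℚ] Rq := aeval ![X 1, X 0 + X 1 ^ n]

def Gq (n : ℕ) : Rq →ₐ[ℚ] Rq := aeval ![X 1 - X 0 ^ n, X 0]

def Tq (n : ℕ) : Rq →ₐ[ℚ] Polynomial Rq :=
  aeval ![Polynomial.C (X 0) * Polynomial.X, Polynomial.C (X 1) * Polynomial.X ^ n]

lemma GF (n : ℕ) (p : Rq) : Gq n (Fq n p) = p := by
  have : (Gq n).comp (Fq n) = AlgHom.id ℚ Rq := by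
    apply MvPolynomial.algHom_ext
    intro i
    fin_cases i <;> simp [Fq, Gq]
  calc Gq n (Fq n p) = ((Gq n).comp (Fq n)) p := rfl
  _ = p := by rw [this]; rfl

/-- monomial as explicit product -/
lemma monomial_eq_prod (d : Fin 2 →₀ ℕ) (c : ℚ) :
    (monomial d c : Rq) = C c * X 0 ^ d 0 * X 1 ^ d 1 := by
  rw [monomial_eq, Finsupp.prod_fintype, Fin.prod_univ_two, mul_assoc]
  intro i; exact pow_zero _

lemma Tq_monomial (n : ℕ) (d : Fin 2 →₀ ℕ) (c : ℚ) :
    Tq n (monomial d c) =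
      Polynomial.C (monomial d c) * Polynomial.X ^ (d 0 + n * d 1) := by
  rw [monomial_eq_prod]
  simp only [map_mul, map_pow, Tq, aeval_X, aeval_C]
  rw [Matrix.cons_val_zero, Matrix.cons_val_one, Matrix.cons_val_zero]
  rw [Polynomial.algebraMap_apply, MvPolynomial.algebraMap_eq]
  simp only [mul_pow, ← pow_mul, ← Polynomial.C_pow, map_mul]
  ring


lemma Tq_coeff_coeff (n : ℕ) (P : Rq) (d : Fin 2 →₀ ℕ) (k : ℕ) :
    coeff d ((Tq n P).coeff k) = if d 0 + n * d 1 = k then coeff d P else 0 := by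
  induction P using MvPolynomial.induction_on' with
  | monomial d' c =>
    rw [Tq_monomial, Polynomial.coeff_C_mul, Polynomial.coeff_X_pow]
    rw [mul_ite, mul_one, mul_zero]
    rw [apply_ite (coeff d), MvPolynomial.coeff_zero]
    by_cases hdd : d' = d
    · subst hdd
      by_cases hk : d' 0 + n * d' 1 = k
      · simp [hk]
      · rw [if_neg hk, if_neg (fun h => hk h.symm)]
    · simp [hdd]
  | add p q hp hq =>
    rw [map_add, Polynomial.coeff_add, MvPolynomial.coeff_add, hp, hq,
      MvPolynomial.coeff_add]
    split_ifs <;> simp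

lemma wt_le_natDegree {n : ℕ} {P : Rq} {d : Fin 2 →₀ ℕ} (h : coeff d P ≠ 0) :
    d 0 + n * d 1 ≤ (Tq n P).natDegree := by
  apply Polynomial.le_natDegree_of_ne_zero
  intro h0
  apply h
  have := Tq_coeff_coeff n P d (d 0 + n * d 1)
  rw [h0, if_pos rfl] at this
  simpa using this.symm

lemma Tq_ne_zero {n : ℕ} {P : Rq} (h : P ≠ 0) : Tq n P ≠ 0 := by
  intro h0
  apply h
  apply MvPolynomial.ext
  intro d
  have := Tq_coeff_coeff n P d (d 0 + n * d 1)
  rw [h0, if_pos rfl] at this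
  simpa using this.symm

lemma eq_C_of_natDegree_eq_zero {n : ℕ} (hn : 1 ≤ n) {P : Rq}
    (h : (Tq n P).natDegree = 0) : P = C (coeff 0 P) := by
  apply MvPolynomial.ext
  intro d
  rw [MvPolynomial.coeff_C]
  by_cases hd : 0 = d
  · subst hd; simp
  · rw [if_neg hd]
    by_contra hne
    have hwt := wt_le_natDegree (n := n) hne
    rw [h, Nat.le_zero] at hwt
    apply hd
    have h0 : d 0 = 0 := by omega
    have h1 : d 1 = 0 := by
      have : n * d 1 = 0 := by omega
      rcases Nat.mul_eq_zero.mp this with h | h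
      · omega
      · exact h
    ext i
    fin_cases i
    · simp [h0]
    · simp [h1]


def Eq' (n : ℕ) : Polynomial Rq :=
  Polynomial.C (X 0) * Polynomial.X + (Polynomial.C (X 1) * Polynomial.X ^ n) ^ n

lemma TqFq_monomial (n : ℕ) (d : Fin 2 →₀ ℕ) (c : ℚ) :
    Tq n (Fq n (monomial d c)) =
      Polynomial.C (C c) * (Polynomial.C (X 1) * Polynomial.X ^ n) ^ d 0 *
        Eq' n ^ d 1 := by
  rw [monomial_eq_prod]
  simp only [Fq, Tq, map_mul, map_pow, map_add, aeval_X, aeval_C,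
    MvPolynomial.algebraMap_eq, Matrix.cons_val_zero, Matrix.cons_val_one, Matrix.head_cons]
  rw [Polynomial.algebraMap_apply, MvPolynomial.algebraMap_eq, Eq']

lemma natDegree_Eq'_le (n : ℕ) (hn : 2 ≤ n) : (Eq' n).natDegree ≤ n * n := by
  apply le_trans (Polynomial.natDegree_add_le _ _)
  apply max_le
  · apply le_trans (Polynomial.natDegree_mul_le)
    simp only [Polynomial.natDegree_C, Polynomial.natDegree_X, zero_add]
    nlinarith
  · apply le_trans (Polynomial.natDegree_pow_le)
    apply le_trans (Nat.mul_le_mul_left n (Polynomial.natDegree_mul_le))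
    simp only [Polynomial.natDegree_C, Polynomial.natDegree_X_pow, zero_add]
    exact le_refl _

lemma natDegree_TqFq_monomial_le (n : ℕ) (hn : 2 ≤ n) (d : Fin 2 →₀ ℕ) (c : ℚ) :
    (Tq n (Fq n (monomial d c))).natDegree ≤ n * (d 0 + n * d 1) := by
  rw [TqFq_monomial]
  have h1 : ((Polynomial.C (C c) * (Polynomial.C (X 1) * Polynomial.X ^ n) ^ d 0 :
      Polynomial Rq)).natDegree ≤ n * d 0 := by
    apply le_trans (Polynomial.natDegree_mul_le)
    simp only [Polynomial.natDegree_C, zero_add]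
    apply le_trans (Polynomial.natDegree_pow_le)
    apply le_trans (Nat.mul_le_mul_left _ (Polynomial.natDegree_mul_le))
    simp [mul_comm]
  have h2 : ((Eq' n) ^ d 1).natDegree ≤ n * n * d 1 := by
    apply le_trans (Polynomial.natDegree_pow_le)
    calc d 1 * (Eq' n).natDegree ≤ d 1 * (n * n) :=
          Nat.mul_le_mul_left _ (natDegree_Eq'_le n hn)
    _ = n * n * d 1 := by ring
  exact le_trans Polynomial.natDegree_mul_le
    (le_trans (Nat.add_le_add h1 h2) (le_of_eq (by ring)))

lemma natDegree_TqFq_le (n : ℕ) (hn : 2 ≤ n) (P : Rq) (N : ℕ)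
    (hN : ∀ d ∈ P.support, d 0 + n * d 1 ≤ N) :
    (Tq n (Fq n P)).natDegree ≤ n * N := by
  conv_lhs => rw [MvPolynomial.as_sum P]
  rw [map_sum, map_sum]
  apply Polynomial.natDegree_sum_le_of_forall_le
  intro d hd
  exact le_trans (natDegree_TqFq_monomial_le n hn d _)
    (Nat.mul_le_mul_left n (hN d hd))

lemma Eq'_coeff (n : ℕ) (hn : 2 ≤ n) : (Eq' n).coeff (n * n) = X 1 ^ n := by
  rw [Eq']
  rw [Polynomial.coeff_add, Polynomial.coeff_C_mul]
  have hX : (Polynomial.X : Polynomial Rq).coeff (n * n) = 0 := by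
    rw [Polynomial.coeff_X, if_neg]
    nlinarith
  rw [hX, mul_zero, zero_add]
  rw [mul_pow, ← Polynomial.C_pow, ← pow_mul, Polynomial.coeff_C_mul,
    Polynomial.coeff_X_pow, if_pos rfl, mul_one]

lemma coeff_TqFq_monomial (n : ℕ) (hn : 2 ≤ n) (d : Fin 2 →₀ ℕ) (c : ℚ) (N : ℕ)
    (hwt : d 0 + n * d 1 ≤ N) :
    (Tq n (Fq n (monomial d c))).coeff (n * N) =
      (if d 0 + n * d 1 = N then c else 0) • X 1 ^ N := by
  have hd0N : d 0 ≤ N := le_trans (Nat.le_add_right _ _) hwt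
  have hmul : n * d 0 + (n * (d 1 * n)) ≤ n * N := by
    calc n * d 0 + n * (d 1 * n) = n * (d 0 + n * d 1) := by ring
    _ ≤ n * N := Nat.mul_le_mul_left n hwt
  have hd0 : n * d 0 ≤ n * N := Nat.mul_le_mul_left n hd0N
  rw [TqFq_monomial]
  have hA : ((Polynomial.C (C c) * (Polynomial.C (X 1) * Polynomial.X ^ n) ^ d 0 :
      Polynomial Rq)).natDegree ≤ n * d 0 := by
    apply le_trans (Polynomial.natDegree_mul_le)
    simp only [Polynomial.natDegree_C, zero_add]
    apply le_trans (Polynomial.natDegree_pow_le)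
    apply le_trans (Nat.mul_le_mul_left _ (Polynomial.natDegree_mul_le))
    simp [mul_comm]
  have hB : ((Eq' n) ^ d 1).natDegree ≤ n * N - n * d 0 := by
    apply le_trans (Polynomial.natDegree_pow_le)
    have := natDegree_Eq'_le n hn
    calc d 1 * (Eq' n).natDegree ≤ d 1 * (n * n) := Nat.mul_le_mul_left _ this
    _ ≤ n * N - n * d 0 := by
        apply Nat.le_sub_of_add_le
        calc d 1 * (n * n) + n * d 0 = n * d 0 + n * (d 1 * n) := by ring
        _ ≤ n * N := hmul
  have hsplit : n * N = n * d 0 + (n * N - n * d 0) := (Nat.add_sub_cancel' hd0).symm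
  rw [hsplit]
  rw [Polynomial.coeff_mul_add_eq_of_natDegree_le hA hB]
  -- coefficient of A
  have hcA : ((Polynomial.C (C c) * (Polynomial.C (X 1) * Polynomial.X ^ n) ^ d 0 :
      Polynomial Rq)).coeff (n * d 0) = C c * X 1 ^ d 0 := by
    rw [mul_pow, ← Polynomial.C_pow, ← pow_mul, Polynomial.coeff_C_mul, Polynomial.coeff_C_mul,
      Polynomial.coeff_X_pow, if_pos rfl, mul_one]
  rw [hcA]
  -- coefficient of B
  have hcB : ((Eq' n) ^ d 1).coeff (n * N - n * d 0) =
      if n * N - n * d 0 = d 1 * (n * n) then (X 1 ^ n) ^ d 1 else 0 := by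
    rw [Polynomial.coeff_pow_eq_ite_of_natDegree_le_of_le (natDegree_Eq'_le n hn)
      (le_trans (le_refl _) ?_), Eq'_coeff n hn]
    apply Nat.le_sub_of_add_le
    calc d 1 * (n * n) + n * d 0 = n * d 0 + n * (d 1 * n) := by ring
    _ ≤ n * N := hmul
  rw [hcB]
  have hcond : (n * N - n * d 0 = d 1 * (n * n)) ↔ (d 0 + n * d 1 = N) := by
    constructor
    · intro h
      have h3 : n * N = n * (d 0 + n * d 1) := by
        rw [← Nat.add_sub_cancel' hd0, h]; ring
      have := Nat.eq_of_mul_eq_mul_left (by omega : 0 < n) h3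
      omega
    · intro h
      apply Nat.sub_eq_of_eq_add
      rw [← h]; ring
  by_cases hc : d 0 + n * d 1 = N
  · rw [if_pos (hcond.mpr hc), if_pos hc]
    rw [smul_eq_C_mul, ← pow_mul, mul_assoc, ← pow_add, hc]
  · rw [if_neg (fun h => hc (hcond.mp h)), if_neg hc, mul_zero, zero_smul]

lemma coeff_TqFq (n : ℕ) (hn : 2 ≤ n) (P : Rq) (N : ℕ)
    (hN : ∀ d ∈ P.support, d 0 + n * d 1 ≤ N) :
    (Tq n (Fq n P)).coeff (n * N) =
      (eval (fun _ => (1:ℚ)) ((Tq n P).coeff N)) • X 1 ^ N := by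
  conv_lhs => rw [MvPolynomial.as_sum P]
  conv_rhs => rw [MvPolynomial.as_sum P]
  rw [map_sum, map_sum, Polynomial.finset_sum_coeff, map_sum, Polynomial.finset_sum_coeff,
    map_sum, Finset.sum_smul]
  apply Finset.sum_congr rfl
  intro d hd
  rw [coeff_TqFq_monomial n hn d _ N (hN d hd)]
  rw [Tq_monomial, Polynomial.coeff_C_mul, Polynomial.coeff_X_pow, mul_ite, mul_one, mul_zero]
  by_cases h : d 0 + n * d 1 = N
  · rw [if_pos h, if_pos h.symm, eval_monomial]
    congr 1
    simp [Finsupp.prod]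
  · rw [if_neg h, if_neg (fun hh => h hh.symm)]
    simp


lemma Tq_C (n : ℕ) (c : ℚ) : Tq n (C c) = Polynomial.C (C c) := by
  rw [Tq, aeval_C, Polynomial.algebraMap_apply, MvPolynomial.algebraMap_eq]

lemma core_step (n : ℕ) (hn : 2 ≤ n) (D : ℚ) (hD : D ≠ 0) (p : Rq)
    (hp : 1 ≤ (Tq n p).natDegree)
    (heq : Fq n (Fq n p) = p + C D * (Fq n p) ^ n) :
    (∃ b : ℚ, b ≠ 0 ∧ D * b ^ (n - 1) = 1) ∨
    (1 ≤ (Tq n (Fq n p)).natDegree ∧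
      (Tq n p).natDegree = n * (Tq n (Fq n p)).natDegree) := by
  have hpne : p ≠ 0 := by
    intro h; rw [h, map_zero, Polynomial.natDegree_zero] at hp; omega
  set q := Fq n p with hq
  have hTp : Tq n p ≠ 0 := Tq_ne_zero hpne
  have hqne : q ≠ 0 := by
    intro h
    apply hpne
    have := congrArg (Gq n) h
    rwa [hq, GF, map_zero] at this
  have hTq : Tq n q ≠ 0 := Tq_ne_zero hqne
  have hsup : ∀ d' ∈ q.support, d' 0 + n * d' 1 ≤ (Tq n q).natDegree :=
    fun d' hd' => wt_le_natDegree (MvPolynomial.mem_support_iff.mp hd')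
  have he1 : 1 ≤ (Tq n q).natDegree := by
    by_contra hcon
    have he0 : (Tq n q).natDegree = 0 := by omega
    have hqC := eq_C_of_natDegree_eq_zero (le_trans one_le_two hn) he0
    have hpC : p = C (coeff 0 q) := by
      calc p = Gq n (Fq n p) := (GF n p).symm
      _ = Gq n (C (coeff 0 q)) := by rw [← hq, ← hqC]
      _ = C (coeff 0 q) := by
          rw [Gq, aeval_C, MvPolynomial.algebraMap_eq]
    rw [hpC, Tq_C, Polynomial.natDegree_C] at hp
    omega
  rcases lt_trichotomy (Tq n p).natDegree (n * (Tq n q).natDegree) with hlt | heqc | hgt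
  · left
    have hmain := congrArg (fun r => (Tq n r).coeff (n * (Tq n q).natDegree)) heq
    rw [coeff_TqFq n hn q (Tq n q).natDegree hsup, map_add, map_mul, map_pow,
      Polynomial.coeff_add, Tq_C, Polynomial.coeff_C_mul,
      Polynomial.coeff_eq_zero_of_natDegree_lt hlt, zero_add,
      Polynomial.coeff_pow_of_natDegree_le (le_refl (Tq n q).natDegree)] at hmain
    set c := eval (fun _ => (1:ℚ)) ((Tq n q).coeff (Tq n q).natDegree) with hc
    have hℓ : (Tq n q).coeff (Tq n q).natDegree ≠ 0 :=
      Polynomial.leadingCoeff_ne_zero.mpr hTq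
    have hCD : (C D : Rq) ≠ 0 := by
      intro hC
      apply hD
      have := congrArg (coeff 0) hC
      simpa using this
    have hcne : c ≠ 0 := by
      intro h0
      rw [h0, zero_smul] at hmain
      exact (mul_ne_zero hCD (pow_ne_zero n hℓ)) hmain.symm
    have happ := congrArg (eval (fun _ => (1:ℚ))) hmain
    rw [smul_eq_C_mul, map_mul, map_mul, map_pow, eval_C, eval_C, map_pow, eval_X,
      one_pow, mul_one] at happ
    refine ⟨c, hcne, ?_⟩
    have hn1 : n - 1 + 1 = n := by omega
    have h2 : (D * c ^ (n - 1)) * c = 1 * c := by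
      rw [one_mul, mul_assoc, ← pow_succ, hn1]
      exact happ.symm
    exact mul_right_cancel₀ hcne h2
  · right
    exact ⟨he1, heqc⟩

  · exfalso
    have hdeg := natDegree_TqFq_le n hn q (Tq n q).natDegree hsup
    have hmain := congrArg (fun r => (Tq n r).coeff (Tq n p).natDegree) heq
    rw [Polynomial.coeff_eq_zero_of_natDegree_lt (lt_of_le_of_lt hdeg hgt),
      map_add, map_mul, map_pow, Polynomial.coeff_add, Tq_C, Polynomial.coeff_C_mul] at hmain
    have hpow0 : ((Tq n q) ^ n).coeff (Tq n p).natDegree = 0 := by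
      apply Polynomial.coeff_eq_zero_of_natDegree_lt
      exact lt_of_le_of_lt Polynomial.natDegree_pow_le hgt
    rw [hpow0, mul_zero, add_zero] at hmain
    exact (Polynomial.leadingCoeff_ne_zero.mpr hTp) hmain.symm

theorem core_exists_b (n : ℕ) (hn : 2 ≤ n) (D : ℚ) (hD : D ≠ 0)
    (P : Rq) (h1 : 1 ≤ (Tq n P).natDegree)
    (hEq : Fq n (Fq n P) = P + C D * (Fq n P) ^ n) :
    ∃ b : ℚ, b ≠ 0 ∧ D * b ^ (n - 1) = 1 := by
  set Pk : ℕ → Rq := fun k => (fun p => Fq n p)^[k] P with hPk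
  have hPsucc : ∀ k, Pk (k + 1) = Fq n (Pk k) := by
    intro k
    rw [hPk]
    exact Function.iterate_succ_apply' _ _ _
  have hFC : Fq n (C D) = C D := by rw [Fq, aeval_C, MvPolynomial.algebraMap_eq]
  have hEqk : ∀ k, Fq n (Fq n (Pk k)) = Pk k + C D * (Fq n (Pk k)) ^ n := by
    intro k
    induction k with
    | zero => simpa [hPk] using hEq
    | succ k ih =>
      rw [hPsucc]
      have h2 := congrArg (Fq n) ih
      rw [map_add, map_mul, map_pow, hFC] at h2
      exact h2
  have main : ∀ k, (∃ b : ℚ, b ≠ 0 ∧ D * b ^ (n - 1) = 1) ∨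
      (1 ≤ (Tq n (Pk k)).natDegree ∧
        (Tq n P).natDegree = n ^ k * (Tq n (Pk k)).natDegree) := by
    intro k
    induction k with
    | zero =>
      right
      constructor
      · simpa [hPk] using h1
      · simp [hPk]
    | succ k ih =>
      rcases ih with h | ⟨hk1, hk2⟩
      · exact Or.inl h
      · rcases core_step n hn D hD (Pk k) hk1 (hEqk k) with h | ⟨h1', h2'⟩
        · exact Or.inl h
        · right
          rw [hPsucc]
          refine ⟨h1', ?_⟩
          rw [hk2, h2']
          ring
  rcases main (Tq n P).natDegree with h | ⟨hk1, hk2⟩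
  · exact h
  · exfalso
    set K := (Tq n P).natDegree
    have h2K : K < 2 ^ K := Nat.lt_two_pow_self
    have hle : 2 ^ K ≤ n ^ K := Nat.pow_le_pow_left hn K
    have : K < n ^ K * (Tq n (Pk K)).natDegree := by
      calc K < 2 ^ K := h2K
      _ ≤ n ^ K := hle
      _ ≤ n ^ K * (Tq n (Pk K)).natDegree := Nat.le_mul_of_pos_right _ (by omega)
    omega


lemma no_rat_solution (m : ℕ) (hm : 2 ≤ m) (D : ℕ) (hD : 0 < D)
    (hpow : ¬ ∃ k : ℤ, k ^ m = (D : ℤ)) (b : ℚ) (hb : b ≠ 0)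
    (h : (D : ℚ) * b ^ m = 1) : False := by
  have hDQ : (D : ℚ) ≠ 0 := Nat.cast_ne_zero.mpr hD.ne'
  have hq : (b⁻¹) ^ m = (D : ℚ) := by
    rw [inv_pow, eq_inv_of_mul_eq_one_left h]
  have hint : IsIntegral ℤ b⁻¹ := by
    refine ⟨Polynomial.X ^ m - Polynomial.C (D : ℤ),
      Polynomial.monic_X_pow_sub_C _ (by omega), ?_⟩
    simp only [Polynomial.eval₂_sub, Polynomial.eval₂_pow, Polynomial.eval₂_X,
      Polynomial.eval₂_C]
    rw [hq]
    simp
  obtain ⟨k, hk⟩ := IsIntegrallyClosed.isIntegral_iff.mp hint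
  apply hpow
  refine ⟨k, ?_⟩
  have hkq : ((k : ℚ)) ^ m = ((D : ℤ) : ℚ) := by
    have : (algebraMap ℤ ℚ) k = (k : ℚ) := by simp
    rw [← this, hk, hq]
    push_cast
    ring
  exact_mod_cast hkq

abbrev Rc := MvPolynomial (Fin 2) ℂ

def Fc (n : ℕ) : Rc →ₐ[ℂ] Rc := aeval ![X 1, X 0 + X 1 ^ n]

lemma eval_aeval_c (x : Fin 2 → ℂ) (g : Fin 2 → Rc) (P : Rc) :
    eval x (aeval g P) = eval (fun i => eval x (g i)) P := by
  induction P using MvPolynomial.induction_on with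
  | C a => simp
  | add p q hp hq => simp only [map_add, hp, hq]
  | mul_X p i hp => simp only [map_mul, hp, aeval_X, eval_X]

lemma map_aeval_vec (g : Fin 2 → Rq) (P : Rq) :
    map (Rat.castHom ℂ) (aeval g P) =
      aeval (fun i => map (Rat.castHom ℂ) (g i)) (map (Rat.castHom ℂ) P) := by
  induction P using MvPolynomial.induction_on with
  | C a => simp [MvPolynomial.algebraMap_eq]
  | add p q hp hq => simp only [map_add, hp, hq]
  | mul_X p i hp => simp only [map_mul, hp, aeval_X, map_X]

lemma map_Fq (n : ℕ) (P : Rq) :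
    map (Rat.castHom ℂ) (Fq n P) = Fc n (map (Rat.castHom ℂ) P) := by
  have hvec : (fun i => map (Rat.castHom ℂ) (![X 1, X 0 + X 1 ^ n] i)) =
      (![X 1, X 0 + X 1 ^ n] : Fin 2 → Rc) := by
    funext i
    fin_cases i <;> simp
  rw [Fq, Fc, map_aeval_vec, hvec]



end CoreHenon

/-- For `m ≥ 2` and `D ≥ 1` not an `m`-th power of an integer, the
Hénon maps `f(x,y) = (y, x + y^{m+1})` and `g(x,y) = (y, x + D y^{m+1})` are conjugated
by `h(x,y) = (αx, αy)` with `α = D^{-1/m}` (so `α^m = 1/D`), a polynomial automorphism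
with coefficients in `ℚ(D^{1/m})`; but no polynomial automorphism with rational
coefficients conjugates `f` to `g`. -/
theorem henon_conjugacy_field_of_definition
    (m D : ℕ) (hm : 2 ≤ m) (hD : 0 < D) (hpow : ¬ ∃ k : ℤ, k ^ m = (D : ℤ)) :
    let f : ℂ × ℂ → ℂ × ℂ := fun p => (p.2, p.1 + p.2 ^ (m + 1))
    let g : ℂ × ℂ → ℂ × ℂ := fun p => (p.2, p.1 + (D : ℂ) * p.2 ^ (m + 1))
    let α : ℂ := (((D : ℝ) ^ (-(m : ℝ)⁻¹) : ℝ) : ℂ)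
    let h : ℂ × ℂ → ℂ × ℂ := fun p => (α * p.1, α * p.2)
    α ^ m = 1 / (D : ℂ) ∧
    h ∘ f = g ∘ h ∧
    IsPolyAutoOver (Subfield.closure {(((D : ℝ) ^ ((m : ℝ)⁻¹) : ℝ) : ℂ)} : Set ℂ) h ∧
    ¬ ∃ ψ : ℂ × ℂ → ℂ × ℂ,
        IsPolyAutoOver (Set.range ((↑) : ℚ → ℂ)) ψ ∧ ψ ∘ f = g ∘ ψ := by
  intro f g α h
  have hDR : (0:ℝ) < (D:ℝ) := Nat.cast_pos.mpr hD
  have hDC : ((D:ℕ) : ℂ) ≠ 0 := Nat.cast_ne_zero.mpr hD.ne'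
  have hmR : (m:ℝ) ≠ 0 := Nat.cast_ne_zero.mpr (by omega)
  have hα : α ^ m = 1 / (D : ℂ) := by
    show ((((D : ℝ) ^ (-(m : ℝ)⁻¹) : ℝ)) : ℂ) ^ m = 1 / (D : ℂ)
    rw [← Complex.ofReal_pow, ← Real.rpow_natCast ((D:ℝ) ^ (-(m:ℝ)⁻¹)) m,
      ← Real.rpow_mul (le_of_lt hDR)]
    rw [show -(m:ℝ)⁻¹ * (m : ℕ) = -1 by field_simp]
    rw [Real.rpow_neg_one, Complex.ofReal_inv, one_div]
    norm_num
  refine ⟨hα, ?_, ?_, ?_⟩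
  · -- conjugacy h ∘ f = g ∘ h
    have hαD : (D:ℂ) * α ^ (m+1) = α := by
      rw [pow_succ, hα]
      field_simp
    funext p
    show (α * p.2, α * (p.1 + p.2 ^ (m+1))) = (α * p.2, α * p.1 + (D:ℂ) * (α * p.2) ^ (m+1))
    refine Prod.ext rfl ?_
    show α * (p.1 + p.2 ^ (m+1)) = α * p.1 + (D:ℂ) * (α * p.2) ^ (m+1)
    linear_combination (-(p.2 ^ (m+1))) * hαD
  · -- h is a polynomial automorphism over ℚ(D^{1/m})
    set β : ℂ := (((D : ℝ) ^ ((m : ℝ)⁻¹) : ℝ) : ℂ) with hβ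
    have hβpos : (0:ℝ) < (D:ℝ) ^ ((m:ℝ)⁻¹) := Real.rpow_pos_of_pos hDR _
    have hβne : β ≠ 0 := Complex.ofReal_ne_zero.mpr hβpos.ne'
    have hαβ : α = β⁻¹ := by
      show (((D:ℝ) ^ (-(m:ℝ)⁻¹) : ℝ) : ℂ) = β⁻¹
      rw [hβ, ← Complex.ofReal_inv]
      congr 1
      rw [← Real.rpow_neg (le_of_lt hDR)]
    have hβmem : β ∈ Subfield.closure {β} := Subfield.subset_closure rfl
    have hαmem : α ∈ Subfield.closure {β} := by
      rw [hαβ]; exact inv_mem hβmem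
    have hβα : β * α = 1 := by rw [hαβ, mul_inv_cancel₀ hβne]
    have hcoeff : ∀ (γ : ℂ), γ ∈ Subfield.closure {β} → ∀ (i : Fin 2) (mo : Fin 2 →₀ ℕ),
        coeff mo (C γ * X i : MvPolynomial (Fin 2) ℂ) ∈
          (Subfield.closure {β} : Subfield ℂ) := by
      intro γ hγ i mo
      rw [MvPolynomial.coeff_C_mul, MvPolynomial.coeff_X']
      split_ifs
      · rw [mul_one]; exact hγ
      · rw [mul_zero]; exact zero_mem _
    refine ⟨⟨C α * X 0, C α * X 1, ?_, hcoeff α hαmem 0, hcoeff α hαmem 1⟩,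
      (fun p => (β * p.1, β * p.2)),
      ⟨C β * X 0, C β * X 1, ?_, hcoeff β hβmem 0, hcoeff β hβmem 1⟩, ?_, ?_⟩
    · intro p
      show (α * p.1, α * p.2) = _
      simp
    · intro p
      simp
    · intro p
      show (β * (α * p.1), β * (α * p.2)) = p
      rw [← mul_assoc, ← mul_assoc, hβα, one_mul, one_mul]
    · intro p
      show (α * (β * p.1), α * (β * p.2)) = p
      rw [← mul_assoc, ← mul_assoc, mul_comm α β, hβα, one_mul, one_mul]
  · -- no rational conjugacy
    rintro ⟨ψ, ⟨⟨P, Q, hPQ, hPco, hQco⟩, ψi, _, hli, _⟩, hconj⟩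
    have hinj : Function.Injective ψ := Function.LeftInverse.injective hli
    set n := m + 1 with hn
    have hn2 : 2 ≤ n := by omega
    have hpt : ∀ p : ℂ × ℂ, ψ (f p) = g (ψ p) := fun p => congrFun hconj p
    have hx : ∀ x : Fin 2 → ℂ, ![x 0, x 1] = x := by
      intro x; funext i; fin_cases i <;> rfl
    have e1 : ∀ x : Fin 2 → ℂ, eval x (Fc n P) = eval x Q := by
      intro x
      have h0 := hpt (x 0, x 1)
      rw [hPQ (x 0, x 1)] at h0
      rw [show f (x 0, x 1) = (x 1, x 0 + x 1 ^ n) from rfl, hPQ (x 1, x 0 + x 1 ^ n)] at h0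
      have hfst := congrArg Prod.fst h0
      simp only [hx] at hfst
      rw [Fc, eval_aeval_c]
      rw [show (fun i => eval x (![X 1, X 0 + X 1 ^ n] i)) = ![x 1, x 0 + x 1 ^ n] from by
        funext i; fin_cases i <;> simp]
      rw [← hx x] at hfst ⊢
      exact hfst
    have e2 : ∀ x : Fin 2 → ℂ, eval x (Fc n Q) = eval x (P + C (D:ℂ) * Q ^ n) := by
      intro x
      have h0 := hpt (x 0, x 1)
      rw [hPQ (x 0, x 1)] at h0
      rw [show f (x 0, x 1) = (x 1, x 0 + x 1 ^ n) from rfl, hPQ (x 1, x 0 + x 1 ^ n)] at h0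
      have hsnd := congrArg Prod.snd h0
      simp only [hx] at hsnd
      rw [Fc, eval_aeval_c]
      rw [show (fun i => eval x (![X 1, X 0 + X 1 ^ n] i)) = ![x 1, x 0 + x 1 ^ n] from by
        funext i; fin_cases i <;> simp]
      rw [map_add, map_mul, eval_C, map_pow]
      rw [← hx x] at hsnd ⊢
      exact hsnd
    have hQid : Fc n P = Q := MvPolynomial.funext e1
    have hPid : Fc n Q = P + C (D:ℂ) * Q ^ n := MvPolynomial.funext e2
    choose cP hcP using hPco
    choose cQ hcQ using hQco
    set P₀ : Rq := ∑ mo ∈ P.support, monomial mo (cP mo) with hP₀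
    set Q₀ : Rq := ∑ mo ∈ Q.support, monomial mo (cQ mo) with hQ₀
    have hmapP : map (Rat.castHom ℂ) P₀ = P := by
      rw [hP₀, map_sum]
      conv_rhs => rw [← MvPolynomial.support_sum_monomial_coeff P]
      refine Finset.sum_congr rfl fun mo _ => ?_
      rw [MvPolynomial.map_monomial]
      congr 1
      exact hcP mo
    have hmapQ : map (Rat.castHom ℂ) Q₀ = Q := by
      rw [hQ₀, map_sum]
      conv_rhs => rw [← MvPolynomial.support_sum_monomial_coeff Q]
      refine Finset.sum_congr rfl fun mo _ => ?_
      rw [MvPolynomial.map_monomial]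
      congr 1
      exact hcQ mo
    have hmapinj : Function.Injective (map (Rat.castHom ℂ) :
        Rq → Rc) := MvPolynomial.map_injective _ Rat.cast_injective
    have hQ0id : Fq n P₀ = Q₀ := by
      apply hmapinj
      rw [map_Fq, hmapP, hmapQ, hQid]
    have hP0id : Fq n Q₀ = P₀ + C ((D:ℕ) : ℚ) * Q₀ ^ n := by
      apply hmapinj
      rw [map_Fq, hmapQ, hPid, map_add, map_mul, map_pow, hmapP, hmapQ, MvPolynomial.map_C]
      norm_num
    have hEqQ : Fq n (Fq n P₀) = P₀ + C ((D:ℕ) : ℚ) * (Fq n P₀) ^ n := by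
      rw [hQ0id, hP0id]
    have h1deg : 1 ≤ (Tq n P₀).natDegree := by
      by_contra hcon
      have h0 : (Tq n P₀).natDegree = 0 := by omega
      obtain ⟨c0, hc0⟩ : ∃ c, P₀ = C c := ⟨_, eq_C_of_natDegree_eq_zero (by omega : 1 ≤ n) h0⟩
      have hQC : Q₀ = C c0 := by
        rw [← hQ0id, hc0, Fq, aeval_C, MvPolynomial.algebraMap_eq]
      have hPC' : P = C ((c0 : ℚ) : ℂ) := by
        rw [← hmapP, hc0, MvPolynomial.map_C]
        rfl
      have hQC' : Q = C ((c0 : ℚ) : ℂ) := by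
        rw [← hmapQ, hQC, MvPolynomial.map_C]
        rfl
      have hconst : ∀ p : ℂ × ℂ, ψ p = (((c0 : ℚ) : ℂ), ((c0 : ℚ) : ℂ)) := by
        intro p
        rw [hPQ p, hPC', hQC']
        simp
      have : ((0:ℂ), (0:ℂ)) = ((1:ℂ), (1:ℂ)) := by
        apply hinj
        rw [hconst ((0:ℂ), (0:ℂ)), hconst ((1:ℂ), (1:ℂ))]
      exact zero_ne_one (congrArg Prod.fst this)
    obtain ⟨b, hb, hDb⟩ := core_exists_b n hn2 ((D:ℕ) : ℚ)
      (Nat.cast_ne_zero.mpr hD.ne') P₀ h1deg hEqQ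
    rw [show n - 1 = m from by omega] at hDb
    exact no_rat_solution m hm D hD hpow b hb hDb
end
end

section
/- Let f be a generalized Hénon map and let p ∈ ℂ² be a point lying neither in K_f⁺ nor in K_f⁻. Then there exists ε > 0 such that the open ball U = B(p, ε) is wandering for f: fⁿ(U) ∩ U = ∅ for every integer n ≠ 0. -/
open Filter MvPolynomial

noncomputable section

/-- The `n`-th iterate of a bijection `f`, for `n : ℤ` (negative iterates use the
inverse map). -/
def zIter (f : ℂ × ℂ → ℂ × ℂ) (n : ℤ) : ℂ × ℂ → ℂ × ℂ :=
  if 0 ≤ n then f^[n.toNat] else (Function.invFun f)^[(-n).toNat]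

lemma poly_lower (p : Polynomial ℂ) (hd : 2 ≤ p.natDegree) (C : ℝ) :
    ∃ R : ℝ, 1 ≤ R ∧ ∀ x : ℂ, R ≤ ‖x‖ → C * ‖x‖ ≤ ‖p.eval x‖ := by
  have hp0 : p ≠ 0 := by
    intro h; rw [h] at hd; simp at hd
  set d := p.natDegree with hdd
  set c := ‖p.leadingCoeff‖ with hcc
  have hc : 0 < c := by
    simpa [hcc] using Polynomial.leadingCoeff_ne_zero.2 hp0
  set B : ℝ := ∑ i ∈ Finset.range d, ‖p.coeff i‖ with hBB
  have hB : 0 ≤ B := Finset.sum_nonneg fun i _ => norm_nonneg _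
  refine ⟨max 1 ((B + |C|) / c), le_max_left _ _, fun x hx => ?_⟩
  have hx1 : (1 : ℝ) ≤ ‖x‖ := le_trans (le_max_left _ _) hx
  have hx2 : (B + |C|) / c ≤ ‖x‖ := le_trans (le_max_right _ _) hx
  have hxc : B + |C| ≤ c * ‖x‖ := by
    rw [div_le_iff₀ hc] at hx2; linarith [hx2]
  -- decompose eval
  have heval : p.eval x = (∑ i ∈ Finset.range d, p.coeff i * x ^ i) + p.leadingCoeff * x ^ d := by
    rw [Polynomial.eval_eq_sum_range, Finset.sum_range_succ, Polynomial.coeff_natDegree]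
  set s : ℂ := ∑ i ∈ Finset.range d, p.coeff i * x ^ i with hs
  have hsb : ‖s‖ ≤ B * ‖x‖ ^ (d - 1) := by
    rw [hs]
    calc ‖∑ i ∈ Finset.range d, p.coeff i * x ^ i‖
        ≤ ∑ i ∈ Finset.range d, ‖p.coeff i * x ^ i‖ := norm_sum_le _ _
      _ ≤ ∑ i ∈ Finset.range d, ‖p.coeff i‖ * ‖x‖ ^ (d - 1) := by
          refine Finset.sum_le_sum fun i hi => ?_
          rw [norm_mul, norm_pow]
          refine mul_le_mul_of_nonneg_left ?_ (norm_nonneg _)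
          have := Finset.mem_range.mp hi
          exact pow_le_pow_right₀ hx1 (by omega : i ≤ d - 1)
      _ = B * ‖x‖ ^ (d - 1) := by rw [← Finset.sum_mul]
  have hlead : ‖p.leadingCoeff * x ^ d‖ = c * ‖x‖ ^ d := by
    rw [norm_mul, norm_pow]
  have htri : c * ‖x‖ ^ d - ‖s‖ ≤ ‖p.eval x‖ := by
    rw [heval, ← hlead]
    have := norm_le_add_norm_add (p.leadingCoeff * x ^ d) s
    have h2 : ‖p.leadingCoeff * x ^ d + s‖ = ‖s + p.leadingCoeff * x ^ d‖ := by ring_nf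
    linarith [this, h2.le]
  have hdsucc : d = (d - 1) + 1 := by omega
  have hkey : C * ‖x‖ ≤ c * ‖x‖ ^ d - B * ‖x‖ ^ (d - 1) := by
    have hxd : ‖x‖ ^ d = ‖x‖ * ‖x‖ ^ (d - 1) := by
      conv_lhs => rw [hdsucc]
      rw [pow_succ]; ring
    have h3 : c * ‖x‖ ^ d - B * ‖x‖ ^ (d - 1) = (c * ‖x‖ - B) * ‖x‖ ^ (d - 1) := by
      rw [hxd]; ring
    rw [h3]
    have h4 : |C| ≤ c * ‖x‖ - B := by linarith [abs_nonneg C]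
    have h5 : ‖x‖ ≤ ‖x‖ ^ (d - 1) := by
      calc ‖x‖ = ‖x‖ ^ 1 := (pow_one _).symm
        _ ≤ ‖x‖ ^ (d - 1) := pow_le_pow_right₀ hx1 (by omega)
    calc C * ‖x‖ ≤ |C| * ‖x‖ ^ (d - 1) := by
          have := le_abs_self C
          have hxnn : (0:ℝ) ≤ ‖x‖ := norm_nonneg _
          nlinarith [mul_nonneg (sub_nonneg.2 this) hxnn, mul_nonneg (abs_nonneg C) (sub_nonneg.2 h5)]
      _ ≤ (c * ‖x‖ - B) * ‖x‖ ^ (d - 1) := by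
          refine mul_le_mul_of_nonneg_right h4 (by positivity)
  linarith

lemma elem_snd {g : ℂ × ℂ → ℂ × ℂ} (hg : IsElementaryHenon g) (q : ℂ × ℂ) :
    (g q).2 = q.1 := by
  obtain ⟨a, p, -, -, h⟩ := hg
  rw [h q]

lemma elem_escape {g : ℂ × ℂ → ℂ × ℂ} (hg : IsElementaryHenon g) :
    ∃ R : ℝ, 1 ≤ R ∧ ∀ q : ℂ × ℂ, R ≤ ‖q.1‖ → ‖q.2‖ ≤ ‖q.1‖ →
      2 * ‖q.1‖ ≤ ‖(g q).1‖ := by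
  obtain ⟨a, p, ha, hd, h⟩ := hg
  obtain ⟨R, hR1, hR⟩ := poly_lower p hd (2 + ‖a‖)
  refine ⟨R, hR1, fun q h1 h2 => ?_⟩
  rw [h q]
  simp only
  have h3 : (2 + ‖a‖) * ‖q.1‖ ≤ ‖p.eval q.1‖ := hR q.1 h1
  have h4 : ‖a * q.2‖ ≤ ‖a‖ * ‖q.1‖ := by
    rw [norm_mul]
    exact mul_le_mul_of_nonneg_left h2 (norm_nonneg _)
  have h5 := norm_le_add_norm_add (p.eval q.1) (a * q.2)
  have h6 : p.eval q.1 + a * q.2 = a * q.2 + p.eval q.1 := by ring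
  rw [h6] at h5
  linarith

lemma elem_bij {g : ℂ × ℂ → ℂ × ℂ} (hg : IsElementaryHenon g) :
    Function.Bijective g := by
  obtain ⟨a, p, ha, hd, h⟩ := hg
  refine Function.bijective_iff_has_inverse.2
    ⟨fun q => (q.2, (q.1 - p.eval q.2) / a), fun q => ?_, fun q => ?_⟩
  · rw [h q]; simp only; field_simp; ext <;> simp [ha]
  · rw [h]; simp only; field_simp; ext <;> simp

lemma elem_cont {g : ℂ × ℂ → ℂ × ℂ} (hg : IsElementaryHenon g) :
    Continuous g := by
  obtain ⟨a, p, ha, hd, h⟩ := hg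
  have : g = fun q : ℂ × ℂ => (a * q.2 + p.eval q.1, q.1) := funext h
  rw [this]
  exact Continuous.prodMk
    (Continuous.add (continuous_const.mul continuous_snd)
      ((Polynomial.continuous p).comp continuous_fst)) continuous_fst

/-- good uniform threshold for a list -/
def GoodR (R : ℝ) (l : List (ℂ × ℂ → ℂ × ℂ)) : Prop :=
  ∀ g ∈ l, IsElementaryHenon g ∧
    ∀ q : ℂ × ℂ, R ≤ ‖q.1‖ → ‖q.2‖ ≤ ‖q.1‖ → 2 * ‖q.1‖ ≤ ‖(g q).1‖

lemma exists_goodR (l : List (ℂ × ℂ → ℂ × ℂ)) (hl : ∀ g ∈ l, IsElementaryHenon g) :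
    ∃ R : ℝ, 1 ≤ R ∧ GoodR R l := by
  induction l with
  | nil => exact ⟨1, le_refl _, fun g hg => absurd hg List.not_mem_nil⟩
  | cons g l ih =>
    obtain ⟨R1, hR11, hR1⟩ := ih (fun h hh => hl h (List.mem_cons_of_mem g hh))
    have hg : IsElementaryHenon g := hl g (List.mem_cons_self)
    obtain ⟨R2, hR21, hR2⟩ := elem_escape hg
    refine ⟨max R1 R2, le_trans hR11 (le_max_left _ _), fun h hh => ?_⟩
    rcases List.mem_cons.mp hh with rfl | hh
    · exact ⟨hg, fun q h1 h2 => hR2 q (le_trans (le_max_right _ _) h1) h2⟩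
    · exact ⟨(hR1 h hh).1, fun q h1 h2 => (hR1 h hh).2 q (le_trans (le_max_left _ _) h1) h2⟩

def Vp (R : ℝ) (q : ℂ × ℂ) : Prop := R ≤ ‖q.1‖ ∧ ‖q.2‖ ≤ ‖q.1‖

lemma comp_escape {R : ℝ} (hR : 1 ≤ R) :
    ∀ (l : List (ℂ × ℂ → ℂ × ℂ)), GoodR R l → ∀ q : ℂ × ℂ, Vp R q →
      Vp R (l.foldr (· ∘ ·) id q) ∧ ‖q.1‖ ≤ ‖(l.foldr (· ∘ ·) id q).1‖ ∧
      (l ≠ [] → 2 * ‖q.1‖ ≤ ‖(l.foldr (· ∘ ·) id q).1‖ ∧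
        2 * ‖(l.foldr (· ∘ ·) id q).2‖ ≤ ‖(l.foldr (· ∘ ·) id q).1‖) := by
  intro l
  induction l with
  | nil => exact fun _ q hq => ⟨hq, le_refl _, fun h => absurd rfl h⟩
  | cons g l ih =>
    intro hgood q hq
    have hgoodl : GoodR R l := fun h hh => hgood h (List.mem_cons_of_mem g hh)
    obtain ⟨hgE, hgesc⟩ := hgood g (List.mem_cons_self)
    obtain ⟨hV, hmono, -⟩ := ih hgoodl q hq
    set q' := l.foldr (· ∘ ·) id q with hq'
    have hfold : (g :: l).foldr (· ∘ ·) id q = g q' := rfl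
    have hdbl : 2 * ‖q'.1‖ ≤ ‖(g q').1‖ := hgesc q' hV.1 hV.2
    have hsnd : (g q').2 = q'.1 := elem_snd hgE q'
    have hq'R : R ≤ ‖q'.1‖ := hV.1
    have h1 : R ≤ ‖(g q').1‖ := by nlinarith [norm_nonneg q'.1]
    have h2 : ‖(g q').2‖ ≤ ‖(g q').1‖ := by
      rw [hsnd]; nlinarith [norm_nonneg q'.1]
    rw [hfold]
    refine ⟨⟨h1, h2⟩, by nlinarith [norm_nonneg q'.1, norm_nonneg q.1], fun _ => ⟨?_, ?_⟩⟩
    · linarith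
    · rw [hsnd]; linarith

lemma dichotomy {R : ℝ} (hR : 1 ≤ R) :
    ∀ (l : List (ℂ × ℂ → ℂ × ℂ)), GoodR R l → ∀ q : ℂ × ℂ,
      Vp R (l.foldr (· ∘ ·) id q) ∨ ‖l.foldr (· ∘ ·) id q‖ ≤ max R ‖q‖ := by
  intro l
  induction l with
  | nil => exact fun _ q => Or.inr (le_max_right _ _)
  | cons g l ih =>
    intro hgood q
    have hgoodl : GoodR R l := fun h hh => hgood h (List.mem_cons_of_mem g hh)
    obtain ⟨hgE, hgesc⟩ := hgood g (List.mem_cons_self)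
    set q' := l.foldr (· ∘ ·) id q with hq'
    have hfold : (g :: l).foldr (· ∘ ·) id q = g q' := rfl
    have hsnd : (g q').2 = q'.1 := elem_snd hgE q'
    rw [hfold]
    rcases ih hgoodl q with hV | hb
    · left
      have hdbl : 2 * ‖q'.1‖ ≤ ‖(g q').1‖ := hgesc q' hV.1 hV.2
      have hq'R : R ≤ ‖q'.1‖ := hV.1
      refine ⟨by nlinarith [norm_nonneg q'.1], ?_⟩
      rw [hsnd]; nlinarith [norm_nonneg q'.1]
    · by_cases hV : Vp R (g q')
      · exact Or.inl hV
      · right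
        have hq'n : ‖q'.1‖ ≤ max R ‖q‖ := by
          have : ‖q'.1‖ ≤ ‖q'‖ := by rw [Prod.norm_def]; exact le_max_left _ _
          linarith
        rw [Vp, not_and_or, not_le, not_le] at hV
        have h1 : ‖(g q').1‖ ≤ max R ‖q‖ := by
          rcases hV with h | h
          · exact le_trans h.le (le_max_left _ _)
          · rw [hsnd] at h; exact le_trans h.le hq'n
        have h2 : ‖(g q').2‖ ≤ max R ‖q‖ := by rw [hsnd]; exact hq'n
        rw [Prod.norm_def]
        exact max_le h1 h2

lemma henon_cont {f : ℂ × ℂ → ℂ × ℂ} (hf : IsHenon f) : Continuous f := by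
  obtain ⟨l, -, hall, rfl⟩ := hf
  induction l with
  | nil => exact continuous_id
  | cons g l ih =>
    have : (g :: l).foldr (· ∘ ·) id = g ∘ l.foldr (· ∘ ·) id := rfl
    rw [this]
    exact (elem_cont (hall g (List.mem_cons_self))).comp
      (ih (fun h hh => hall h (List.mem_cons_of_mem g hh)))

lemma henon_bij {f : ℂ × ℂ → ℂ × ℂ} (hf : IsHenon f) : Function.Bijective f := by
  obtain ⟨l, -, hall, rfl⟩ := hf
  induction l with
  | nil => exact Function.bijective_id
  | cons g l ih =>
    have : (g :: l).foldr (· ∘ ·) id = g ∘ l.foldr (· ∘ ·) id := rfl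
    rw [this]
    exact (elem_bij (hall g (List.mem_cons_self))).comp
      (ih (fun h hh => hall h (List.mem_cons_of_mem g hh)))

lemma not_periodic {f : ℂ × ℂ → ℂ × ℂ} {p : ℂ × ℂ} (hp : p ∉ Kplus f) :
    ∀ n : ℕ, 1 ≤ n → f^[n] p ≠ p := by
  intro n hn hper
  apply hp
  have key : ∀ m : ℕ, ∃ r, r < n ∧ f^[m] p = f^[r] p := by
    intro m
    induction m using Nat.strong_induction_on with
    | _ m ih =>
      by_cases h : m < n
      · exact ⟨m, h, rfl⟩
      · push_neg at h
        obtain ⟨r, hr, he⟩ := ih (m - n) (by omega)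
        refine ⟨r, hr, ?_⟩
        have : m = (m - n) + n := by omega
        rw [this, Function.iterate_add_apply, hper, he]
  have hsub : (Set.range fun m : ℕ => f^[m] p) ⊆ (fun r : ℕ => f^[r] p) '' (Set.Iio n) := by
    rintro x ⟨m, rfl⟩
    obtain ⟨r, hr, he⟩ := key m
    exact ⟨r, hr, he.symm⟩
  exact ((Set.finite_Iio n).image _).isBounded.subset hsub

/-- combining finitely many ε's -/
lemma exists_min_eps (P : ℕ → ℝ → Prop)
    (hmono : ∀ n ε' ε, ε' ≤ ε → P n ε → P n ε')
    (M : ℕ) (h : ∀ n, n < M → ∃ ε > 0, P n ε) :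
    ∃ ε > 0, ∀ n, n < M → P n ε := by
  induction M with
  | zero => exact ⟨1, one_pos, fun n hn => absurd hn (by omega)⟩
  | succ M ih =>
    obtain ⟨ε1, hε1, h1⟩ := ih (fun n hn => h n (by omega))
    obtain ⟨ε2, hε2, h2⟩ := h M (by omega)
    refine ⟨min ε1 ε2, lt_min hε1 hε2, fun n hn => ?_⟩
    by_cases hnM : n < M
    · exact hmono n _ ε1 (min_le_left _ _) (h1 n hnM)
    · have : n = M := by omega
      rw [this]
      exact hmono M _ ε2 (min_le_right _ _) h2

lemma forward_wandering {f : ℂ × ℂ → ℂ × ℂ} (hf : IsHenon f) {p : ℂ × ℂ}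
    (hp : p ∉ Kplus f) :
    ∃ ε > 0, ∀ n : ℕ, 1 ≤ n → f^[n] '' Metric.ball p ε ∩ Metric.ball p ε = ∅ := by
  obtain ⟨l, hne, hall, hfl⟩ := hf
  obtain ⟨R, hR1, hgood⟩ := exists_goodR l hall
  have hR0 : 0 < R := lt_of_lt_of_le one_pos hR1
  -- single-step facts
  have stepA : ∀ q : ℂ × ℂ, Vp R q → Vp R (f q) ∧ ‖q.1‖ ≤ ‖(f q).1‖ ∧
      2 * ‖(f q).2‖ ≤ ‖(f q).1‖ := by
    intro q hq
    obtain ⟨h1, h2, h3⟩ := comp_escape hR1 l hgood q hq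
    exact ⟨by rwa [hfl], by rwa [hfl], by rw [hfl]; exact (h3 hne).2⟩
  have stepA2 : ∀ q : ℂ × ℂ, Vp R q → 2 * ‖q.1‖ ≤ ‖(f q).1‖ := by
    intro q hq
    have := (comp_escape hR1 l hgood q hq).2.2 hne
    rw [hfl]; exact this.1
  have stepB : ∀ q : ℂ × ℂ, Vp R (f q) ∨ ‖f q‖ ≤ max R ‖q‖ := by
    intro q
    have := dichotomy hR1 l hgood q
    rwa [hfl]
  -- Step 1: some iterate enters V
  have henter : ∃ N : ℕ, Vp R (f^[N] p) := by
    by_contra h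
    push_neg at h
    apply hp
    have hbd : ∀ n : ℕ, ‖f^[n] p‖ ≤ max R ‖p‖ := by
      intro n
      induction n with
      | zero => simpa using le_max_right _ _
      | succ n ih =>
        rw [Function.iterate_succ_apply']
        rcases stepB (f^[n] p) with hV | hb
        · exact absurd (show Vp R (f^[n + 1] p) by
            rw [Function.iterate_succ_apply']; exact hV) (h (n + 1))
        · exact le_trans hb (max_le (le_max_left _ _) ih)
    rw [Kplus, Set.mem_setOf_eq, isBounded_iff_forall_norm_le]
    exact ⟨max R ‖p‖, by rintro x ⟨n, rfl⟩; exact hbd n⟩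
  obtain ⟨N, hN⟩ := henter
  -- Step 2: growth
  have hgrow : ∀ j : ℕ, Vp R (f^[N + j] p) ∧ 2 ^ j * R ≤ ‖(f^[N + j] p).1‖ := by
    intro j
    induction j with
    | zero =>
      refine ⟨by simpa using hN, ?_⟩
      simp only [pow_zero, one_mul, Nat.add_zero]
      exact hN.1
    | succ j ih =>
      have heq : N + (j + 1) = (N + j) + 1 := by omega
      rw [heq, Function.iterate_succ_apply']
      constructor
      · exact (stepA _ ih.1).1
      · have := stepA2 _ ih.1
        have h2 : (2:ℝ) ^ (j+1) * R = 2 * (2 ^ j * R) := by ring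
        rw [h2]
        linarith [ih.2]
  -- constants
  set S : ℝ := ‖p‖ + 1 with hSdef
  have hS1 : 1 ≤ S := by rw [hSdef]; linarith [norm_nonneg p]
  set T : ℝ := max (2 * R) (8 * S) with hTdef
  obtain ⟨j, hj⟩ : ∃ j : ℕ, T / R < 2 ^ j := pow_unbounded_of_one_lt (T / R) one_lt_two
  have hjT : T < 2 ^ j * R := by
    rw [div_lt_iff₀ hR0] at hj; linarith
  set M : ℕ := N + j + 1 with hMdef
  set q0 : ℂ × ℂ := f^[N + j] p with hq0
  set w : ℂ × ℂ := f^[M] p with hw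
  have hwq0 : w = f q0 := by
    rw [hw, hq0, hMdef, Function.iterate_succ_apply']
  have hq0V : Vp R q0 := (hgrow j).1
  have hq0T : T < ‖q0.1‖ := lt_of_lt_of_le hjT (hgrow j).2
  have hwV : Vp R w := by rw [hwq0]; exact (stepA q0 hq0V).1
  have hw1 : T < ‖w.1‖ := by
    have h1 := stepA2 q0 hq0V
    rw [hwq0]
    nlinarith [norm_nonneg q0.1]
  have hw2 : 2 * ‖w.2‖ ≤ ‖w.1‖ := by rw [hwq0]; exact (stepA q0 hq0V).2.2
  have hwR : 2 * R ≤ ‖w.1‖ := le_trans (le_max_left _ _) hw1.le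
  have hwS : 8 * S ≤ ‖w.1‖ := le_trans (le_max_right _ _) hw1.le
  set δ : ℝ := min (R / 2) S with hδdef
  have hδ0 : 0 < δ := lt_min (by linarith) (by linarith)
  have hδR : δ ≤ R / 2 := min_le_left _ _
  have hδS : δ ≤ S := min_le_right _ _
  -- points near w are deep in V
  have hC1 : ∀ u : ℂ × ℂ, dist u w ≤ δ → Vp R u ∧ 2 * S ≤ ‖u.1‖ := by
    intro u hu
    have hm1 : dist u.1 w.1 ≤ dist u w := by
      rw [Prod.dist_eq]; exact le_max_left _ _
    have hm2 : dist u.2 w.2 ≤ dist u w := by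
      rw [Prod.dist_eq]; exact le_max_right _ _
    have hu1 : ‖w.1‖ - δ ≤ ‖u.1‖ := by
      have := abs_norm_sub_norm_le u.1 w.1
      rw [← dist_eq_norm] at this
      have := abs_le.mp this
      linarith [le_trans hm1 hu]
    have hu2 : ‖u.2‖ ≤ ‖w.2‖ + δ := by
      have := abs_norm_sub_norm_le u.2 w.2
      rw [← dist_eq_norm] at this
      have := abs_le.mp this
      linarith [le_trans hm2 hu]
    refine ⟨⟨by linarith, by linarith⟩, by linarith⟩
  -- iterates of points deep in V stay far away
  have hC2 : ∀ u : ℂ × ℂ, Vp R u → 2 * S ≤ ‖u.1‖ →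
      ∀ m : ℕ, Vp R (f^[m] u) ∧ 2 * S ≤ ‖(f^[m] u).1‖ := by
    intro u hV hS2 m
    induction m with
    | zero => exact ⟨hV, hS2⟩
    | succ m ih =>
      rw [Function.iterate_succ_apply']
      exact ⟨(stepA _ ih.1).1, le_trans ih.2 (stepA _ ih.1).2.1⟩
  -- continuity
  have hcont : Continuous f := henon_cont ⟨l, hne, hall, hfl⟩
  obtain ⟨ε₁, hε₁0, hε₁⟩ := Metric.continuousAt_iff.mp ((hcont.iterate M).continuousAt) δ hδ0
  -- far-future avoidance
  have hbig : ∀ x : ℂ × ℂ, dist x p < ε₁ → ∀ n : ℕ, M ≤ n →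
      ¬ (f^[n] x ∈ Metric.ball p 1) := by
    intro x hx n hn hmem
    have hu : dist (f^[M] x) w ≤ δ := by
      have := hε₁ hx
      rw [← hw] at this
      exact this.le
    obtain ⟨hVu, hSu⟩ := hC1 (f^[M] x) hu
    have heq : f^[n] x = f^[n - M] (f^[M] x) := by
      conv_lhs => rw [show n = (n - M) + M by omega]
      rw [Function.iterate_add_apply]
    have hfar : 2 * S ≤ ‖(f^[n] x).1‖ := by
      rw [heq]; exact (hC2 _ hVu hSu (n - M)).2
    have hp1 : ‖p.1‖ ≤ ‖p‖ := norm_fst_le p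
    have hdist : dist (f^[n] x) p < 1 := Metric.mem_ball.mp hmem
    have hd1 : dist (f^[n] x).1 p.1 ≤ dist (f^[n] x) p := by
      rw [Prod.dist_eq]; exact le_max_left _ _
    have : ‖(f^[n] x).1‖ - ‖p.1‖ ≤ dist (f^[n] x).1 p.1 := by
      rw [dist_eq_norm]
      linarith [abs_le.mp (abs_norm_sub_norm_le (f^[n] x).1 p.1)]
    rw [hSdef] at hfar
    linarith
  -- small n
  set P : ℕ → ℝ → Prop := fun n ε =>
    1 ≤ n → f^[n] '' Metric.ball p ε ∩ Metric.ball p ε = ∅ with hP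
  have hmono : ∀ n ε' ε, ε' ≤ ε → P n ε → P n ε' := by
    intro n ε' ε hle h hn
    rw [Set.eq_empty_iff_forall_notMem]
    rintro x ⟨⟨u, hu, rfl⟩, hx⟩
    have hsub : Metric.ball p ε' ⊆ Metric.ball p ε := Metric.ball_subset_ball hle
    have := h hn
    rw [Set.eq_empty_iff_forall_notMem] at this
    exact this (f^[n] u) ⟨⟨u, hsub hu, rfl⟩, hsub hx⟩
  have hsmall : ∀ n, n < M → ∃ ε > 0, P n ε := by
    intro n hnM
    by_cases hn1 : 1 ≤ n
    · have hne_p : f^[n] p ≠ p := not_periodic hp n hn1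
      have hd : 0 < dist (f^[n] p) p := dist_pos.mpr hne_p
      obtain ⟨ε₂, hε₂0, hε₂⟩ := Metric.continuousAt_iff.mp
        ((hcont.iterate n).continuousAt) (dist (f^[n] p) p / 2) (by linarith)
      refine ⟨min ε₂ (dist (f^[n] p) p / 2), lt_min hε₂0 (by linarith), fun _ => ?_⟩
      rw [Set.eq_empty_iff_forall_notMem]
      rintro x ⟨⟨u, hu, rfl⟩, hx⟩
      rw [Metric.mem_ball] at hu hx
      have h1 : dist (f^[n] u) (f^[n] p) < dist (f^[n] p) p / 2 :=
        hε₂ (lt_of_lt_of_le hu (min_le_left _ _))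
      have h2 : dist (f^[n] u) p < dist (f^[n] p) p / 2 :=
        lt_of_lt_of_le hx (min_le_right _ _)
      have := dist_triangle (f^[n] p) (f^[n] u) p
      rw [dist_comm (f^[n] p) (f^[n] u)] at this
      linarith
    · exact ⟨1, one_pos, fun h => absurd h hn1⟩
  obtain ⟨εs, hεs0, hεs⟩ := exists_min_eps P hmono M hsmall
  refine ⟨min εs (min ε₁ 1), lt_min hεs0 (lt_min hε₁0 one_pos), fun n hn => ?_⟩
  set ε := min εs (min ε₁ 1) with hε
  by_cases hnM : n < M
  · exact hmono n ε εs (min_le_left _ _) (hεs n hnM) hn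
  · push_neg at hnM
    rw [Set.eq_empty_iff_forall_notMem]
    rintro x ⟨⟨u, hu, rfl⟩, hx⟩
    rw [Metric.mem_ball] at hu
    have hu1 : dist u p < ε₁ :=
      lt_of_lt_of_le hu (le_trans (min_le_right _ _) (min_le_left _ _))
    refine hbig u hu1 n hnM ?_
    rw [Metric.mem_ball] at hx ⊢
    exact lt_of_lt_of_le hx (le_trans (min_le_right _ _) (min_le_right _ _))


/-- If `f` is a generalized Hénon map and `p ∉ K_f⁺ ∪ K_f⁻`, then
some small ball around `p` is wandering: `fⁿ(U) ∩ U = ∅` for every integer `n ≠ 0`. -/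
theorem wandering_ball_outside_K
    (f : ℂ × ℂ → ℂ × ℂ) (hf : IsHenon f) (p : ℂ × ℂ)
    (hp : p ∉ Kplus f ∪ Kminus f) :
    ∃ ε > 0, ∀ n : ℤ, n ≠ 0 →
      zIter f n '' Metric.ball p ε ∩ Metric.ball p ε = ∅ := by
  have hpK : p ∉ Kplus f := fun h => hp (Set.mem_union_left _ h)
  obtain ⟨ε, hε0, hfw⟩ := forward_wandering hf hpK
  have hbij := henon_bij hf
  have hli : Function.LeftInverse f (Function.invFun f) :=
    Function.rightInverse_invFun hbij.2
  refine ⟨ε, hε0, fun n hn => ?_⟩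
  rcases lt_trichotomy n 0 with hneg | hzero | hpos
  · have hm : 1 ≤ (-n).toNat := by omega
    have hz : zIter f n = (Function.invFun f)^[(-n).toNat] := by
      rw [zIter, if_neg (by omega)]
    rw [hz, Set.eq_empty_iff_forall_notMem]
    rintro x ⟨⟨u, hu, rfl⟩, hx⟩
    have hfix : f^[(-n).toNat] ((Function.invFun f)^[(-n).toNat] u) = u :=
      (hli.iterate (-n).toNat) u
    have := hfw (-n).toNat hm
    rw [Set.eq_empty_iff_forall_notMem] at this
    exact this u ⟨⟨(Function.invFun f)^[(-n).toNat] u, hx, hfix⟩, hu⟩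
  · exact absurd hzero hn
  · have hz : zIter f n = f^[n.toNat] := by rw [zIter, if_pos (by omega)]
    rw [hz]
    exact hfw n.toNat (by omega)
end
end
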